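/- Under the setting of the manifold Lyapunov theorem, if M: I_{t^0} × P → ℝ is C^1, locally positive definite at the equilibrium x_e from t^0, and additionally decrescent at x_e from t^0 (i.e., M(t,x) ≤ β(d(x,x_e)) for some continuous strictly increasing β with β(0)=0 on some ball B_{s,x_e}), and Ṁ(t,x) ≤ 0 on I_{t^0} × B_{r,x_e}, then x_e is uniformly stable from t^0 (the δ in the stability definition can be chosen independently of t_0). -/
import Mathlib


/- STATEMENT 1: Uniform stability.  Same setting as the manifold Lyapunov
theorem: `P` a metric space (Riemannian distance), `Sol` the set of solution
curves of dx/dt = X(t,x), `xe` an equilibrium point, `M` a C¹ function which is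
locally positive definite (via `α`) and decrescent (via `β`) at `xe` from `t0`,
with derivative along solutions nonpositive near `xe`.  Conclusion: `xe` is
uniformly stable from `t0`: the `δ` can be chosen independently of the initial
time `t₁ ≥ t0`. -/
theorem lyapunov_uniformly_stable_manifold
    {P : Type*} [MetricSpace P]
    (Sol : Set (ℝ → P)) (hScont : ∀ x ∈ Sol, Continuous x)
    (xe : P) (heq : (fun _ : ℝ => xe) ∈ Sol)
    (t0 : ℝ) (M : ℝ → P → ℝ)
    (hMcont : Continuous fun q : ℝ × P => M q.1 q.2)
    (r : ℝ) (hr : 0 < r)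
    (α : ℝ → ℝ) (hαc : ContinuousOn α (Set.Ici 0))
    (hαm : StrictMonoOn α (Set.Ici 0)) (hα0 : α 0 = 0)
    (hMe : ∀ t ∈ Set.Ici t0, M t xe = 0)
    (hlpdf : ∀ t ∈ Set.Ici t0, ∀ x ∈ Metric.ball xe r, α (dist x xe) ≤ M t x)
    (s : ℝ) (hs : 0 < s)
    (β : ℝ → ℝ) (hβc : ContinuousOn β (Set.Ici 0))
    (hβm : StrictMonoOn β (Set.Ici 0)) (hβ0 : β 0 = 0)
    (hdecr : ∀ t ∈ Set.Ici t0, ∀ x ∈ Metric.ball xe s, M t x ≤ β (dist x xe))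
    (hdot : ∀ x ∈ Sol, ∀ t ∈ Set.Ici t0, x t ∈ Metric.ball xe r →
      ∃ m ≤ 0, HasDerivAt (fun s => M s (x s)) m t) :
    ∀ ε > 0, ∃ δ > 0, ∀ t₁ ∈ Set.Ici t0, ∀ x ∈ Sol,
      dist (x t₁) xe < δ → ∀ t ∈ Set.Ici t₁, dist (x t) xe < ε := by
  intro eps heps
  set e : ℝ := min eps (min r s) / 2 with he
  have he0 : 0 < e := by positivity
  have heε : e < eps := by
    have : min eps (min r s) ≤ eps := min_le_left _ _
    simp only [he]; linarith
  have her : e < r := by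
    have : min eps (min r s) ≤ r := (min_le_right _ _).trans (min_le_left _ _)
    simp only [he]; linarith
  have hes : e < s := by
    have : min eps (min r s) ≤ s := (min_le_right _ _).trans (min_le_right _ _)
    simp only [he]; linarith
  have hαe : 0 < α e := by
    have := hαm (Set.self_mem_Ici) (Set.mem_Ici.mpr he0.le) he0
    rwa [hα0] at this
  -- choose δβ from continuity of β at 0
  have hβt : Filter.Tendsto β (nhdsWithin 0 (Set.Ici 0)) (nhds 0) := by
    have := (hβc 0 Set.self_mem_Ici)
    rwa [ContinuousWithinAt, hβ0] at this
  obtain ⟨δβ, hδβ0, hδβ'⟩ := (Metric.tendsto_nhdsWithin_nhds.mp hβt) (α e) hαe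
  have hδβ : ∀ d ∈ Set.Ici (0:ℝ), dist d 0 < δβ → β d < α e := by
    intro d hd hdd
    have := hδβ' hd hdd
    rw [Real.dist_eq, sub_zero] at this
    exact lt_of_le_of_lt (le_abs_self _) this
  refine ⟨min δβ e, lt_min hδβ0 he0, ?_⟩
  intro t₁ ht₁ x hx hxd t ht
  have ht₁0 : t0 ≤ t₁ := ht₁
  have hd1e : dist (x t₁) xe < e := lt_of_lt_of_le hxd (min_le_right _ _)
  have hβsmall : β (dist (x t₁) xe) < α e := by
    apply hδβ _ (Set.mem_Ici.mpr dist_nonneg)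
    simp only [Real.dist_eq, sub_zero, abs_of_nonneg dist_nonneg]
    exact lt_of_lt_of_le hxd (min_le_left _ _)
  -- main claim: dist (x u) xe < e for all u ≥ t₁
  by_contra hcon
  push_neg at hcon
  have htt₁ : t₁ ≤ t := ht
  have htbig : eps ≤ dist (x t) xe := hcon
  have htbig' : e ≤ dist (x t) xe := le_trans heε.le htbig
  set S := {u ∈ Set.Icc t₁ t | e ≤ dist (x u) xe} with hS
  have hxc : Continuous x := hScont x hx
  have hdc : Continuous fun u => dist (x u) xe := (hxc.dist continuous_const)
  have hSc : IsClosed S := (isClosed_Icc).inter (isClosed_le continuous_const hdc)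
  have hSne : S.Nonempty := ⟨t, ⟨htt₁, le_rfl⟩, htbig'⟩
  have hSbdd : BddBelow S := ⟨t₁, fun u hu => hu.1.1⟩
  set T := sInf S with hT
  have hTS : T ∈ S := hSc.csInf_mem hSne hSbdd
  have hTt₁ : t₁ ≤ T := le_csInf hSne fun u hu => hu.1.1
  have hTlt : t₁ < T := by
    rcases eq_or_lt_of_le hTt₁ with h | h
    · exfalso; have := hTS.2; rw [← h] at this; linarith
    · exact h
  have hIco : ∀ u ∈ Set.Ico t₁ T, dist (x u) xe < e := by
    intro u hu
    by_contra h
    push_neg at h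
    have huS : u ∈ S := ⟨⟨hu.1, hu.2.le.trans hTS.1.2⟩, h⟩
    exact absurd (csInf_le hSbdd huS) (not_le.mpr hu.2)
  have hTle : dist (x T) xe ≤ e := by
    have hsub : Set.Ico t₁ T ⊆ {u | dist (x u) xe ≤ e} :=
      fun u hu => (hIco u hu).le
    have hclosed : IsClosed {u | dist (x u) xe ≤ e} := isClosed_le hdc continuous_const
    have : T ∈ closure (Set.Ico t₁ T) := by
      rw [closure_Ico hTlt.ne]
      exact ⟨hTt₁, le_rfl⟩
    exact hclosed.closure_subset (closure_mono hsub this)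
  have hTeq : dist (x T) xe = e := le_antisymm hTle hTS.2
  -- dist ≤ e on [t₁, T]
  have hIcc : ∀ u ∈ Set.Icc t₁ T, dist (x u) xe ≤ e := by
    intro u hu
    rcases eq_or_lt_of_le hu.2 with h | h
    · rw [h, hTeq]
    · exact (hIco u ⟨hu.1, h⟩).le
  -- M(u, x u) antitone on [t₁, T]
  set g := fun u => M u (x u) with hg
  have hgc : Continuous g := hMcont.comp (continuous_id.prodMk hxc)
  have hanti : AntitoneOn g (Set.Icc t₁ T) := by
    apply antitoneOn_of_deriv_nonpos (convex_Icc t₁ T) hgc.continuousOn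
    · intro u hu
      rw [interior_Icc] at hu
      obtain ⟨m, hm0, hder⟩ := hdot x hx u (le_trans ht₁0 hu.1.le)
        (by rw [Metric.mem_ball]; exact lt_of_le_of_lt (hIcc u ⟨hu.1.le, hu.2.le⟩) her)
      exact hder.differentiableAt.differentiableWithinAt
    · intro u hu
      rw [interior_Icc] at hu
      obtain ⟨m, hm0, hder⟩ := hdot x hx u (le_trans ht₁0 hu.1.le)
        (by rw [Metric.mem_ball]; exact lt_of_le_of_lt (hIcc u ⟨hu.1.le, hu.2.le⟩) her)
      rw [hder.deriv]; exact hm0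
  have hmono : g T ≤ g t₁ := hanti ⟨le_rfl, hTt₁⟩ ⟨hTt₁, le_rfl⟩ hTt₁
  -- chain of inequalities
  have h1 : α e ≤ g T := by
    have := hlpdf T (le_trans ht₁0 hTt₁) (x T)
      (by rw [Metric.mem_ball, hTeq]; exact her)
    rwa [hTeq] at this
  have h2 : g t₁ ≤ β (dist (x t₁) xe) :=
    hdecr t₁ ht₁0 (x t₁) (by rw [Metric.mem_ball]; exact hd1e.trans hes)
  linarith
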